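/- Let n ≥ 1, let ω = e^{2πi/3}, and let (h_{i,j}, v_{i,j}, d_{i,j})_{1≤i,j≤n} be an Alternating Phase Matrix of type 1, of type 2, or of type 3. Then the complex entries a_{i,j} := −ω·h_{i,j} + ω²·v_{i,j} satisfy Σ_{i,j=1}^{n} a_{i,j} = n. -/

import Mathlib

namespace APM

/-- `AltOn s f a b`: reading the values `f j` for `j ∈ s` in increasing order,
the nonzero values strictly alternate in sign, the first one being `a` and the
last one being `b` (vacuously true if all values on `s` are zero). -/
def AltOn (s : Finset ℤ) (f : ℤ → ℤ) (a b : ℤ) : Prop :=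
  (∀ j₁ ∈ s, ∀ j₂ ∈ s, j₁ < j₂ → f j₁ ≠ 0 → f j₂ ≠ 0 →
    (∀ j ∈ s, j₁ < j → j < j₂ → f j = 0) → f j₂ = -f j₁) ∧
  (∀ j₀ ∈ s, f j₀ ≠ 0 → (∀ j ∈ s, j < j₀ → f j = 0) → f j₀ = a) ∧
  (∀ j₀ ∈ s, f j₀ ≠ 0 → (∀ j ∈ s, j₀ < j → f j = 0) → f j₀ = b)

/-- An APM datum: entries `(h,v,d) ∈ {-1,0,1}³` with `h + v + d = 0` on the
grid `[1,n] × [1,n]`. -/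
def IsAPMDatum (n : ℕ) (h v d : ℤ → ℤ → ℤ) : Prop :=
  ∀ i ∈ Finset.Icc (1 : ℤ) n, ∀ j ∈ Finset.Icc (1 : ℤ) n,
    h i j ∈ ({-1, 0, 1} : Set ℤ) ∧ v i j ∈ ({-1, 0, 1} : Set ℤ) ∧
    d i j ∈ ({-1, 0, 1} : Set ℤ) ∧ h i j + v i j + d i j = 0

/-- Conditions (1), (2), (3) common to APM of types 1, 2, 3. -/
def APMCommon (n : ℕ) (h v : ℤ → ℤ → ℤ) : Prop :=
  (∀ i ∈ Finset.Icc (1 : ℤ) n, ∃ j ∈ Finset.Icc (1 : ℤ) n, h i j ≠ 0) ∧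
  (∀ j ∈ Finset.Icc (1 : ℤ) n, ∃ i ∈ Finset.Icc (1 : ℤ) n, v i j ≠ 0) ∧
  (∀ i ∈ Finset.Icc (1 : ℤ) n, AltOn (Finset.Icc 1 n) (fun j => h i j) 1 1) ∧
  (∀ j ∈ Finset.Icc (1 : ℤ) n, AltOn (Finset.Icc 1 n) (fun i => v i j) (-1) (-1))

/-- Row indices of the diagonal `{(i, i+ℓ)}` of the `[1,n]²` grid. -/
noncomputable def diagSet (n : ℕ) (ℓ : ℤ) : Finset ℤ :=
  Finset.Icc (max 1 (1 - ℓ)) (min (n : ℤ) ((n : ℤ) - ℓ))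

/-- Type-1 diagonal alternation conditions. -/
def APMDiag1 (n : ℕ) (d : ℤ → ℤ → ℤ) : Prop :=
  ∀ ℓ ∈ Finset.Icc (1 - (n : ℤ)) ((n : ℤ) - 1),
    (0 < ℓ → AltOn (diagSet n ℓ) (fun i => d i (i + ℓ)) (-1) 1) ∧
    (ℓ ≤ 0 → AltOn (diagSet n ℓ) (fun i => d i (i + ℓ)) 1 (-1))

/-- Type-2 diagonal alternation conditions. -/
def APMDiag2 (n : ℕ) (d : ℤ → ℤ → ℤ) : Prop :=
  ∀ ℓ ∈ Finset.Icc (1 - (n : ℤ)) ((n : ℤ) - 1),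
    (0 ≤ ℓ → AltOn (diagSet n ℓ) (fun i => d i (i + ℓ)) (-1) 1) ∧
    (ℓ < 0 → AltOn (diagSet n ℓ) (fun i => d i (i + ℓ)) 1 (-1))

/-- Type-3 diagonal alternation conditions. -/
def APMDiag3 (n : ℕ) (d : ℤ → ℤ → ℤ) : Prop :=
  ∀ ℓ ∈ Finset.Icc (1 - (n : ℤ)) ((n : ℤ) - 1),
    AltOn (diagSet n ℓ) (fun i => d i (i + ℓ)) (-1) 1

/-- Alternating Phase Matrix of type 4. -/
def APMType4 (n : ℕ) (h v d : ℤ → ℤ → ℤ) : Prop :=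
  IsAPMDatum n h v d ∧
  (∀ i ∈ Finset.Icc (1 : ℤ) n, AltOn (Finset.Icc 1 n) (fun j => h i j) 1 (-1)) ∧
  (∀ j ∈ Finset.Icc (1 : ℤ) n, AltOn (Finset.Icc 1 n) (fun i => v i j) 1 (-1)) ∧
  APMDiag3 n d

/-- `ω = e^{2πi/3}`. -/
noncomputable def ω : ℂ := Complex.exp (2 * Real.pi * Complex.I / 3)

/-- The complex APM entry `a_{i,j} = -ω h_{i,j} + ω² v_{i,j}`. -/
noncomputable def apmEntry (h v : ℤ → ℤ → ℤ) (i j : ℤ) : ℂ :=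
  -ω * (h i j : ℂ) + ω ^ 2 * (v i j : ℂ)

end APM

namespace APM

/-- If the nonzero values of `f` on `s`, read in increasing order, alternate
from `a` to `b`, and some value is nonzero, then twice the sum equals `a + b`. -/
lemma altSum (s : Finset ℤ) : ∀ f : ℤ → ℤ, ∀ a b : ℤ, AltOn s f a b →
    (∃ j ∈ s, f j ≠ 0) → 2 * ∑ j ∈ s, f j = a + b := by
  induction s using Finset.strongInduction with
  | _ s ih =>
    rintro f a b ⟨h1, h2, h3⟩ ⟨jw, hjws, hjw⟩
    -- the set of nonzero positions
    set t := s.filter (fun j => f j ≠ 0) with ht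
    have htne : t.Nonempty := ⟨jw, Finset.mem_filter.2 ⟨hjws, hjw⟩⟩
    set j₀ := t.max' htne with hj₀
    have hj₀t : j₀ ∈ t := t.max'_mem htne
    have hj₀s : j₀ ∈ s := (Finset.mem_filter.1 hj₀t).1
    have hj₀ne : f j₀ ≠ 0 := (Finset.mem_filter.1 hj₀t).2
    have hmax : ∀ j ∈ s, j₀ < j → f j = 0 := by
      intro j hjs hlt
      by_contra hne
      exact absurd (t.le_max' j (Finset.mem_filter.2 ⟨hjs, hne⟩)) (not_le.2 hlt)
    have hfb : f j₀ = b := h3 j₀ hj₀s hj₀ne hmax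
    set s' := s.filter (fun j => j < j₀) with hs'
    have hsub : s' ⊂ s := by
      refine Finset.filter_ssubset.2 ⟨j₀, hj₀s, lt_irrefl j₀⟩
    have hmem' : ∀ j, j ∈ s' ↔ j ∈ s ∧ j < j₀ := by
      intro j; simp [hs']
    -- split the sum
    have hsplit : ∑ j ∈ s, f j = (∑ j ∈ s', f j) + b := by
      have := Finset.sum_filter_add_sum_filter_not s (fun j => j < j₀) f
      rw [← this]
      congr 1
      rw [Finset.sum_eq_single j₀]
      · exact hfb
      · intro j hj hne
        have hj' := Finset.mem_filter.1 hj
        have : j₀ < j := lt_of_le_of_ne (not_lt.1 hj'.2) (Ne.symm hne)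
        exact hmax j hj'.1 this
      · intro hnot
        exact absurd (Finset.mem_filter.2 ⟨hj₀s, by simp⟩) hnot
    by_cases hz : ∃ j ∈ s', f j ≠ 0
    · -- inductive case
      have halt' : AltOn s' f a (-b) := by
        refine ⟨?_, ?_, ?_⟩
        · intro j₁ hj₁ j₂ hj₂ hlt hn1 hn2 hzero
          have hj₁' := (hmem' j₁).1 hj₁
          have hj₂' := (hmem' j₂).1 hj₂
          refine h1 j₁ hj₁'.1 j₂ hj₂'.1 hlt hn1 hn2 ?_
          intro j hjs ha hb
          exact hzero j ((hmem' j).2 ⟨hjs, hb.trans hj₂'.2⟩) ha hb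
        · intro j₁ hj₁ hn hzero
          have hj₁' := (hmem' j₁).1 hj₁
          refine h2 j₁ hj₁'.1 hn ?_
          intro j hjs hlt
          exact hzero j ((hmem' j).2 ⟨hjs, hlt.trans hj₁'.2⟩) hlt
        · intro j₁ hj₁ hn hzero
          have hj₁' := (hmem' j₁).1 hj₁
          have key : f j₀ = -f j₁ := by
            refine h1 j₁ hj₁'.1 j₀ hj₀s hj₁'.2 hn hj₀ne ?_
            intro j hjs ha hb
            exact hzero j ((hmem' j).2 ⟨hjs, hb⟩) ha
          omega
      have := ih s' hsub f a (-b) halt' hz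
      omega
    · -- j₀ is the only nonzero value
      push_neg at hz
      have hfa : f j₀ = a := by
        refine h2 j₀ hj₀s hj₀ne ?_
        intro j hjs hlt
        exact hz j ((hmem' j).2 ⟨hjs, hlt⟩)
      have hsum0 : ∑ j ∈ s', f j = 0 := by
        apply Finset.sum_eq_zero
        intro j hj; exact hz j hj
      omega

lemma omega_sq_add : ω ^ 2 + ω + 1 = 0 := by
  have hp : IsPrimitiveRoot ω 3 := by
    have := Complex.isPrimitiveRoot_exp 3 (by norm_num)
    convert this using 2
    simp [ω]
  have hcube : ω ^ 3 = 1 := hp.pow_eq_one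
  have hne : ω ≠ 1 := by
    intro h
    exact hp.ne_one (by norm_num) h
  have hfac : (ω - 1) * (ω ^ 2 + ω + 1) = 0 := by linear_combination hcube
  rcases mul_eq_zero.1 hfac with h | h
  · exact absurd (sub_eq_zero.1 h) hne
  · exact h

/-- For an Alternating Phase Matrix of type 1, 2 or 3, the sum
of the complex entries `a_{i,j} = -ω h_{i,j} + ω² v_{i,j}` equals `n`. -/
theorem apm_type123_sum_eq_n (n : ℕ) (hn : 1 ≤ n) (h v d : ℤ → ℤ → ℤ)
    (hdat : IsAPMDatum n h v d) (hcom : APMCommon n h v)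
    (htype : APMDiag1 n d ∨ APMDiag2 n d ∨ APMDiag3 n d) :
    ∑ i ∈ Finset.Icc (1 : ℤ) n, ∑ j ∈ Finset.Icc (1 : ℤ) n, apmEntry h v i j
      = (n : ℂ) := by
  classical
  obtain ⟨hrowex, hcolex, hrowalt, hcolalt⟩ := hcom
  set S := Finset.Icc (1 : ℤ) n with hS
  have hrow : ∀ i ∈ S, ∑ j ∈ S, h i j = 1 := by
    intro i hi
    have h2 : 2 * ∑ j ∈ S, h i j = 1 + 1 :=
      altSum S (fun j => h i j) 1 1 (hrowalt i hi) (hrowex i hi)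
    omega
  have hcol : ∀ j ∈ S, ∑ i ∈ S, v i j = -1 := by
    intro j hj
    have h2 : 2 * ∑ i ∈ S, v i j = -1 + -1 :=
      altSum S (fun i => v i j) (-1) (-1) (hcolalt j hj) (hcolex j hj)
    omega
  have hcard : S.card = n := by
    rw [hS, Int.card_Icc]
    simp
  have hhsum : ∑ i ∈ S, ∑ j ∈ S, h i j = (n : ℤ) := by
    rw [Finset.sum_congr rfl hrow]
    simp [hcard]
  have hvsum : ∑ i ∈ S, ∑ j ∈ S, v i j = -(n : ℤ) := by
    rw [Finset.sum_comm, Finset.sum_congr rfl hcol]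
    simp [hcard]
  have hω : ω ^ 2 + ω + 1 = 0 := omega_sq_add
  calc ∑ i ∈ S, ∑ j ∈ S, apmEntry h v i j
      = -ω * ((∑ i ∈ S, ∑ j ∈ S, h i j : ℤ) : ℂ)
        + ω ^ 2 * ((∑ i ∈ S, ∑ j ∈ S, v i j : ℤ) : ℂ) := by
        simp only [apmEntry, Finset.sum_add_distrib, ← Finset.mul_sum]
        push_cast
        ring
    _ = (n : ℂ) := by
        rw [hhsum, hvsum]
        push_cast
        linear_combination (-(n : ℂ)) * hω


end APM
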